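/- Let Z be an array of k integers, Y its prefix-sum array, and I the strict running-maximum indicator. Suppose Z[i] is increased by 1. Then for every index p with p < i or p > j, where j = min { j ≥ i : I[j] = 1 } (the next marked position at or after i), the value of I[p] is unchanged; moreover I[j] remains 1. -/

import Mathlib

/-- Index `i` is marked (`I[i] = 1`) iff `Y[i]` strictly exceeds all earlier
values `Y[0..i-1]`; `Marked Y 0` holds, matching `I[0] = 1`. -/
def Marked (Y : ℕ → ℤ) (i : ℕ) : Prop := ∀ p < i, Y p < Y i

/-- Increasing `Z[i]` by 1 increases all prefix sums `Y[p]`, `p ≥ i`, by 1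
(array `Y'`).  If `j` is the next marked position at or after `i`, then for every
`p < i` or `p > j` the indicator value `I[p]` is unchanged, and `I[j]` remains 1. -/
theorem stmt3 (k i j : ℕ) (Y Y' : ℕ → ℤ) (hY0 : Y 0 = 0)
    (hi : 1 ≤ i) (hij : i ≤ j) (hjk : j ≤ k)
    (hjm : Marked Y j) (hjmin : ∀ q, i ≤ q → q < j → ¬ Marked Y q)
    (hY' : ∀ p, Y' p = if i ≤ p then Y p + 1 else Y p) :
    (∀ p, p < i ∨ j < p → (Marked Y' p ↔ Marked Y p)) ∧ Marked Y' j := by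
  have hMj' : Marked Y' j := by
    intro q hq
    rw [hY' q, hY' j, if_pos hij]
    by_cases hqi : i ≤ q
    · rw [if_pos hqi]; exact add_lt_add_left (hjm q hq) 1
    · rw [if_neg hqi]
      exact lt_trans (hjm q hq) (lt_add_one _)
  refine ⟨?_, hMj'⟩
  intro p hp
  rcases hp with hp | hp
  · constructor
    · intro h q hq
      have h1 := h q hq
      rw [hY' q, hY' p, if_neg (by omega), if_neg (by omega)] at h1
      exact h1
    · intro h q hq
      rw [hY' q, hY' p, if_neg (by omega), if_neg (by omega)]
      exact h q hq
  · have hYp' : Y' p = Y p + 1 := by rw [hY' p, if_pos (by omega)]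
    constructor
    · intro h q hq
      by_cases hqi : i ≤ q
      · have h1 := h q hq
        rw [hY' q, hYp', if_pos hqi] at h1
        omega
      · -- q < i ≤ j < p : Y q < Y j < Y p
        have hYj : Y j < Y p := by
          have h1 := h j hp
          rw [hY' j, hYp', if_pos hij] at h1
          omega
        exact lt_trans (hjm q (by omega)) hYj
    · intro h q hq
      rw [hY' q, hYp']
      by_cases hqi : i ≤ q
      · rw [if_pos hqi]; exact add_lt_add_left (h q hq) 1
      · rw [if_neg hqi]; exact lt_trans (h q hq) (lt_add_one _)
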